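/- For every integer C ≥ 2 and every real λ > 0, if Λ_n := ∑_{i=0}^n λ^i/i!, then Λ_{C-1}^2 - Λ_C·Λ_{C-2} > 0. -/

import Mathlib

theorem stmt0 (C : ℕ) (hC : 2 ≤ C) (lam : ℝ) (hlam : 0 < lam)
    (Λ : ℕ → ℝ) (hΛ : ∀ n, Λ n = ∑ i ∈ Finset.range (n + 1), lam ^ i / (Nat.factorial i)) :
    Λ (C - 1) ^ 2 - Λ C * Λ (C - 2) > 0 := by
  obtain ⟨k, rfl⟩ : ∃ k, C = k + 2 := ⟨C - 2, by omega⟩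
  set a : ℕ → ℝ := fun i => lam ^ i / (Nat.factorial i) with ha
  have hapos : ∀ i, 0 < a i := fun i => by
    exact div_pos (pow_pos hlam i) (by exact_mod_cast Nat.factorial_pos i)
  have h1 : Λ (k + 2 - 1) = ∑ i ∈ Finset.range (k + 2), a i := by
    rw [hΛ]; norm_num
  have h2 : Λ (k + 2) = (∑ i ∈ Finset.range (k + 2), a i) + a (k + 2) := by
    rw [hΛ, Finset.sum_range_succ]
  have h3 : Λ (k + 2 - 2) = (∑ i ∈ Finset.range (k + 2), a i) - a (k + 1) := by
    rw [hΛ]; norm_num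
    simp [Finset.sum_range_succ]
  rw [h1, h2, h3]
  have key : a (k + 2) * ((∑ i ∈ Finset.range (k + 2), a i) - a (k + 1))
      < a (k + 1) * ∑ i ∈ Finset.range (k + 2), a i := by
    have hsub : (∑ i ∈ Finset.range (k + 2), a i) - a (k + 1) = ∑ i ∈ Finset.range (k + 1), a i := by
      rw [Finset.sum_range_succ]; ring
    rw [hsub, Finset.sum_range_succ' (fun i => a i) (k + 1), mul_add,
      Finset.mul_sum, Finset.mul_sum]
    have hterm : ∀ i ∈ Finset.range (k + 1), a (k + 2) * a i ≤ a (k + 1) * a (i + 1) := by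
      intro i hi
      simp only [Finset.mem_range] at hi
      have hfac : ((k + 1).factorial : ℝ) * (i + 1).factorial ≤ ((k + 2).factorial : ℝ) * i.factorial := by
        have : (k + 1).factorial * (i + 1).factorial ≤ (k + 2).factorial * i.factorial := by
          rw [Nat.factorial_succ (i), Nat.factorial_succ (k + 1)]
          have : (i + 1) * ((k + 1).factorial * i.factorial) ≤ (k + 2) * ((k + 1).factorial * i.factorial) :=
            Nat.mul_le_mul_right _ (by omega)
          calc (k+1).factorial * ((i+1) * i.factorial) = (i+1) * ((k+1).factorial * i.factorial) := by ring
            _ ≤ (k+2) * ((k+1).factorial * i.factorial) := this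
            _ = (k+2) * (k+1).factorial * i.factorial := by ring
        exact_mod_cast this
      have hpow : a (k + 2) * a i = lam ^ (k + 2 + i) / ((k + 2).factorial * i.factorial) := by
        simp [ha, pow_add, div_mul_div_comm]
      have hpow2 : a (k + 1) * a (i + 1) = lam ^ (k + 2 + i) / ((k + 1).factorial * (i + 1).factorial) := by
        simp [ha, div_mul_div_comm, ← pow_add]
        ring_nf
      rw [hpow, hpow2]
      apply div_le_div_of_nonneg_left (le_of_lt (pow_pos hlam _)) _ hfac
      positivity
    have hsum := Finset.sum_le_sum hterm
    have h0 : 0 < a (k + 1) * a 0 := mul_pos (hapos _) (hapos _)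
    linarith
  nlinarith [key]
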